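/- Let λ > 0 and m ∈ (-1,1). The function g(w) = (1+w)^{-1 + (1+m)/λ} (1-w)^{-1 + (1-m)/λ} is differentiable on (-1,1) and satisfies on (-1,1) the stationary Fokker-Planck equation (λ/2) d/dw [ (1-w²) g(w) ] + (w - m) g(w) = 0. -/

import Mathlib

open Set

/-- The stationary solution for `D(|w|) = √(1-w²)`: the explicit density `g`
is differentiable on `(-1,1)` and solves
`(λ/2) d/dw[(1-w²) g] + (w-m) g = 0` there. -/
theorem stationary_solution_sqrt_diffusion
    (l m : ℝ) (hl : 0 < l) (hm : m ∈ Ioo (-1:ℝ) 1)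
    (g : ℝ → ℝ)
    (hg : ∀ w, g w =
      (1 + w) ^ (-1 + (1 + m)/l) * (1 - w) ^ (-1 + (1 - m)/l)) :
    DifferentiableOn ℝ g (Ioo (-1:ℝ) 1) ∧
      ∀ w ∈ Ioo (-1:ℝ) 1,
        HasDerivAt (fun w => (l/2) * ((1 - w^2) * g w)) (-((w - m) * g w)) w := by
  set p : ℝ := -1 + (1 + m)/l with hp
  set q : ℝ := -1 + (1 - m)/l with hq
  have h1 : ∀ r : ℝ, ∀ w ∈ Ioo (-1:ℝ) 1,
      HasDerivAt (fun w : ℝ => (1 + w) ^ r) (r * (1 + w) ^ (r - 1)) w := by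
    intro r w hw
    have hpos : (0:ℝ) < 1 + w := by linarith [hw.1]
    have hne : (1:ℝ) + w ≠ 0 := ne_of_gt hpos
    have hin : HasDerivAt (fun w : ℝ => 1 + w) 1 w := (hasDerivAt_id w).const_add 1
    have := (Real.hasDerivAt_rpow_const (p := r) (Or.inl hne)).comp w hin
    simp at this
    exact this
  have h2 : ∀ r : ℝ, ∀ w ∈ Ioo (-1:ℝ) 1,
      HasDerivAt (fun w : ℝ => (1 - w) ^ r) (-(r * (1 - w) ^ (r - 1))) w := by
    intro r w hw
    have hpos : (0:ℝ) < 1 - w := by linarith [hw.2]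
    have hne : (1:ℝ) - w ≠ 0 := ne_of_gt hpos
    have hin : HasDerivAt (fun w : ℝ => 1 - w) (-1) w := (hasDerivAt_id w).const_sub 1
    have := (Real.hasDerivAt_rpow_const (p := r) (Or.inl hne)).comp w hin
    simp at this
    exact this
  have hgfun : g = fun w : ℝ => (1 + w) ^ p * (1 - w) ^ q := funext hg
  constructor
  · intro w hw
    exact (((h1 p w hw).mul (h2 q w hw)).differentiableAt.congr_of_eventuallyEq
      (by filter_upwards with x using (hg x))).differentiableWithinAt
  · intro w hw
    have hposA : (0:ℝ) < 1 + w := by linarith [hw.1]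
    have hposB : (0:ℝ) < 1 - w := by linarith [hw.2]
    have hAne : (1:ℝ) + w ≠ 0 := ne_of_gt hposA
    have hBne : (1:ℝ) - w ≠ 0 := ne_of_gt hposB
    have hF : HasDerivAt (fun w : ℝ => (l/2) * ((1 + w) ^ (p+1) * (1 - w) ^ (q+1)))
        ((l/2) * ((p+1) * (1 + w) ^ (p+1-1) * (1 - w) ^ (q+1) +
          (1 + w) ^ (p+1) * (-((q+1) * (1 - w) ^ (q+1-1))))) w :=
      ((h1 (p+1) w hw).mul (h2 (q+1) w hw)).const_mul (l/2)
    have heq : (fun w : ℝ => (l/2) * ((1 + w) ^ (p+1) * (1 - w) ^ (q+1)))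
        =ᶠ[nhds w] (fun w : ℝ => (l/2) * ((1 - w^2) * g w)) := by
      filter_upwards [isOpen_Ioo.mem_nhds hw] with x hx
      have hA : (0:ℝ) < 1 + x := by linarith [hx.1]
      have hB : (0:ℝ) < 1 - x := by linarith [hx.2]
      rw [hg x, Real.rpow_add_one (ne_of_gt hA), Real.rpow_add_one (ne_of_gt hB)]
      ring
    have hF' := hF.congr_of_eventuallyEq heq.symm
    refine hF'.congr_deriv (Eq.symm ?_)
    have e1 : p + 1 - 1 = p := by ring
    have e2 : q + 1 - 1 = q := by ring
    rw [e1, e2, Real.rpow_add_one hAne, Real.rpow_add_one hBne, hg w]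
    have hp1 : p + 1 = (1 + m)/l := by rw [hp]; ring
    have hq1 : q + 1 = (1 - m)/l := by rw [hq]; ring
    rw [hp1, hq1]
    field_simp
    ring
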